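/- For every nontrivial element w of a free group there exists a unique element u and a unique positive integer n such that w = u^n and u is not a proper power (i.e. u = v^k with k ≥ 1 implies k = 1). -/

import Mathlib

open Subgroup

namespace FGAux
variable {β : Type*} {α : Type*}

lemma eq_one_of_isEmpty [IsEmpty β] (x : FreeGroup β) : x = 1 := by
  refine FreeGroup.induction_on x rfl (fun a => isEmptyElim a) (fun a _ => isEmptyElim a)
    (fun a b ha hb => by rw [ha, hb, one_mul])

/-- exponent sum hom sending every generator to 1 -/
def totalExp : FreeGroup β →* Multiplicative ℤ :=
  FreeGroup.lift fun _ => Multiplicative.ofAdd 1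

lemma totalExp_of (a : β) : totalExp (FreeGroup.of a) = Multiplicative.ofAdd 1 := by
  simp [totalExp]

/-- exponent sum at a single generator -/
def expAt [DecidableEq β] (a : β) : FreeGroup β →* Multiplicative ℤ :=
  FreeGroup.lift fun x => Multiplicative.ofAdd (if x = a then 1 else 0)

lemma expAt_of_self [DecidableEq β] (a : β) :
    expAt a (FreeGroup.of a) = Multiplicative.ofAdd 1 := by simp [expAt]

lemma expAt_of_ne [DecidableEq β] {a b : β} (h : b ≠ a) :
    expAt a (FreeGroup.of b) = 1 := by simp [expAt, h]

lemma of_zpow_ne_one (a : β) {n : ℤ} (hn : n ≠ 0) : (FreeGroup.of a) ^ n ≠ 1 := by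
  intro h
  have := congrArg totalExp h
  simp only [map_zpow, totalExp_of, map_one] at this
  have := congrArg Multiplicative.toAdd this
  simp at this
  exact hn this

end FGAux
namespace FGAux
variable {β : Type*} {α : Type*}

/-- A free group is torsion-free: powers of a nontrivial element are injective. -/
lemma zpow_injective {x : FreeGroup α} (hx : x ≠ 1) :
    Function.Injective fun n : ℤ => x ^ n := by
  rw [injective_zpow_iff_not_isOfFinOrder]
  intro hfin
  have hFin : Finite (zpowers x) := hfin.finite_zpowers.to_subtype
  set H := zpowers x with hH
  let e := IsFreeGroup.toFreeGroup H
  rcases isEmpty_or_nonempty (IsFreeGroup.Generators H) with hE | hNE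
  · have : e ⟨x, mem_zpowers x⟩ = e 1 := by
      rw [map_one]; exact eq_one_of_isEmpty _
    exact hx (congrArg Subtype.val (e.injective this))
  · obtain ⟨b⟩ := hNE
    have : Function.Injective fun n : ℤ => e.symm (FreeGroup.of b ^ n) := by
      intro i j hij
      simp only at hij
      have := e.symm.injective hij
      have h2 : (FreeGroup.of b) ^ i * ((FreeGroup.of b) ^ j)⁻¹ = 1 := by
        rw [this]; group
      rw [← zpow_sub] at h2
      by_contra hne
      exact of_zpow_ne_one b (sub_ne_zero.mpr hne) h2
    exact (Finite.of_injective _ this).false.elim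
namespace A
variable {β : Type*} {α : Type*}

lemma cyclic_of_subsingleton [Subsingleton β] :
    ∃ g : FreeGroup β, ∀ x : FreeGroup β, x ∈ zpowers g := by
  rcases isEmpty_or_nonempty β with hE | ⟨⟨b⟩⟩
  · exact ⟨1, fun x => by rw [eq_one_of_isEmpty x]; exact one_mem _⟩
  · refine ⟨FreeGroup.of b, fun x => ?_⟩
    refine FreeGroup.induction_on x (one_mem _) (fun a => ?_) (fun a _ => ?_)
      (fun a c ha hc => mul_mem ha hc)
    · rw [Subsingleton.elim a b]; exact mem_zpowers _
    · rw [Subsingleton.elim a b]; exact inv_mem (mem_zpowers _)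

lemma subsingleton_of_comm
    (hcomm : ∀ x y : FreeGroup β, Commute x y) : Subsingleton β := by
  by_contra hsub
  rw [not_subsingleton_iff_nontrivial] at hsub
  obtain ⟨a, b, hab⟩ := hsub
  classical
  let f : β → Equiv.Perm (Fin 3) := fun x =>
    if x = a then Equiv.swap 0 1 else if x = b then Equiv.swap 1 2 else 1
  have h := congrArg (FreeGroup.lift f) (hcomm (FreeGroup.of a) (FreeGroup.of b))
  simp only [map_mul, FreeGroup.lift_apply_of] at h
  have hfa : f a = Equiv.swap 0 1 := by simp [f]
  have hfb : f b = Equiv.swap 1 2 := by simp [f, hab.symm]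
  rw [hfa, hfb] at h
  exact absurd h (by decide)

/-- An abelian free group is cyclic. -/
lemma exists_gen_of_comm {G : Type*} [Group G] [IsFreeGroup G]
    (hcomm : ∀ x y : G, Commute x y) : ∃ g : G, ∀ x : G, x ∈ zpowers g := by
  let e := IsFreeGroup.toFreeGroup G
  have hcomm' : ∀ x y : FreeGroup (IsFreeGroup.Generators G), Commute x y := by
    intro x y
    have := congrArg e (hcomm (e.symm x) (e.symm y))
    exact (by simpa [map_mul] using this : x * y = y * x)
  haveI := subsingleton_of_comm hcomm'
  obtain ⟨g, hg⟩ := cyclic_of_subsingleton (β := IsFreeGroup.Generators G)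
  refine ⟨e.symm g, fun x => ?_⟩
  obtain ⟨k, hk⟩ := mem_zpowers_iff.mp (hg (e x))
  exact mem_zpowers_iff.mpr ⟨k, by rw [← map_zpow, hk, MulEquiv.symm_apply_apply]⟩

end A
end FGAux
namespace FGAux
open A
variable {β : Type*} {α : Type*}

lemma closure_pair_comm {G : Type*} [Group G] {a b : G} (h : Commute a b) :
    ∀ x ∈ closure {a, b}, ∀ y ∈ closure {a, b}, Commute x y := by
  have hsub : ({a, b} : Set G) ⊆ centralizer {a, b} := by
    rintro x (rfl | rfl) <;> rintro y (rfl | rfl) <;>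
      simp_all [Commute, SemiconjBy, h.eq]
  have h1 : closure {a, b} ≤ centralizer {a, b} := (closure_le _).mpr hsub
  have h2 : closure {a, b} ≤ centralizer (closure {a, b} : Set G) :=
    le_trans (closure_le_centralizer_centralizer _) (centralizer_le h1)
  intro x hx y hy
  exact (mem_centralizer_iff.mp (h2 hy) x hx)

/-- Commuting elements of a free group are powers of a common element. -/
lemma exists_common_root {a b : FreeGroup α} (h : Commute a b) :
    ∃ z : FreeGroup α, a ∈ zpowers z ∧ b ∈ zpowers z := by
  set H := closure ({a, b} : Set (FreeGroup α)) with hH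
  have ha : a ∈ H := subset_closure (by simp)
  have hb : b ∈ H := subset_closure (by simp)
  have hcomm : ∀ x y : H, Commute x y := by
    rintro ⟨x, hx⟩ ⟨y, hy⟩
    have := closure_pair_comm h x hx y hy
    exact Subtype.ext (by simpa [Commute, SemiconjBy] using this)
  obtain ⟨g, hg⟩ := exists_gen_of_comm hcomm
  refine ⟨(g : FreeGroup α), ?_, ?_⟩
  · obtain ⟨k, hk⟩ := mem_zpowers_iff.mp (hg ⟨a, ha⟩)
    exact mem_zpowers_iff.mpr ⟨k, by have := congrArg Subtype.val hk; simpa using this⟩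
  · obtain ⟨k, hk⟩ := mem_zpowers_iff.mp (hg ⟨b, hb⟩)
    exact mem_zpowers_iff.mpr ⟨k, by have := congrArg Subtype.val hk; simpa using this⟩

end FGAux
namespace FGAux
open A
variable {β : Type*} {α : Type*}

lemma eq_of_zpow_eq_of {a : β} {g : FreeGroup β} {j : ℤ}
    (h : g ^ j = FreeGroup.of a) : g = FreeGroup.of a ∨ g = (FreeGroup.of a)⁻¹ := by
  have h1 := congrArg totalExp h
  rw [map_zpow, totalExp_of] at h1
  have h2 : j * Multiplicative.toAdd (totalExp g) = 1 := by
    have := congrArg Multiplicative.toAdd h1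
    simpa [mul_comm] using this
  have hj : j = 1 ∨ j = -1 := Int.isUnit_iff.mp (IsUnit.of_mul_eq_one _ h2)
  rcases hj with rfl | rfl
  · left; simpa using h
  · right; rw [← h]; group
  
/-- A free group with a nontrivial central element is abelian. -/
lemma comm_of_center {c : FreeGroup β} (hc : c ≠ 1)
    (hcen : ∀ x : FreeGroup β, Commute c x) :
    ∀ x y : FreeGroup β, Commute x y := by
  classical
  have hsub : Subsingleton β := by
    by_contra hsub
    rw [not_subsingleton_iff_nontrivial] at hsub
    obtain ⟨a, b, hab⟩ := hsub
    have key : ∀ d : β, c ∈ zpowers (FreeGroup.of d) := by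
      intro d
      obtain ⟨z, hcz, hdz⟩ := exists_common_root (hcen (FreeGroup.of d))
      obtain ⟨j, hj⟩ := mem_zpowers_iff.mp hdz
      rcases eq_of_zpow_eq_of hj with rfl | hz
      · exact hcz
      · obtain ⟨i, hi⟩ := mem_zpowers_iff.mp hcz
        exact mem_zpowers_iff.mpr ⟨-i, by rw [← hi, hz]; group⟩
    obtain ⟨p, hp⟩ := mem_zpowers_iff.mp (key a)
    obtain ⟨q, hq⟩ := mem_zpowers_iff.mp (key b)
    have hp0 : p ≠ 0 := by rintro rfl; exact hc (by simpa using hp.symm)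
    have h1 := congrArg (expAt a) hp
    have h2 := congrArg (expAt a) hq
    rw [map_zpow, expAt_of_self] at h1
    rw [map_zpow, expAt_of_ne hab.symm] at h2
    rw [← h2] at h1
    have := congrArg Multiplicative.toAdd h1
    simp at this
    exact hp0 this
  obtain ⟨g, hg⟩ := cyclic_of_subsingleton (β := β)
  intro x y
  obtain ⟨i, hi⟩ := mem_zpowers_iff.mp (hg x)
  obtain ⟨j, hj⟩ := mem_zpowers_iff.mp (hg y)
  rw [← hi, ← hj]
  exact (Commute.refl g).zpow_zpow i j

/-- If a nontrivial common power exists, the elements commute. -/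
lemma commute_of_zpow_eq {z y : FreeGroup α} {j t : ℤ}
    (h : z ^ j = y ^ t) (hne : z ^ j ≠ 1) : Commute z y := by
  set H := closure ({z, y} : Set (FreeGroup α)) with hH
  have hz : z ∈ H := subset_closure (by simp)
  have hy : y ∈ H := subset_closure (by simp)
  have hcH : z ^ j ∈ H := zpow_mem hz j
  have hcen : ∀ x ∈ H, Commute (z ^ j) x := by
    intro x hx
    induction hx using closure_induction with
    | mem w hw =>
      rcases hw with rfl | rfl
      · exact (Commute.refl w).zpow_left j
      · rw [h]; exact (Commute.refl w).zpow_left t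
    | one => exact Commute.one_right _
    | mul _ _ _ _ h1 h2 => exact h1.mul_right h2
    | inv _ _ h1 => exact h1.inv_right
  -- move to the subgroup, which is free
  let e := IsFreeGroup.toFreeGroup H
  have hcen' : ∀ x : FreeGroup (IsFreeGroup.Generators H), Commute (e ⟨z ^ j, hcH⟩) x := by
    intro x
    have := hcen ((e.symm x) : FreeGroup α) (e.symm x).2
    have hc2 : Commute (⟨z ^ j, hcH⟩ : H) (e.symm x) :=
      Subtype.ext (by simpa [Commute, SemiconjBy] using this)
    have := congrArg e hc2
    simpa [Commute, SemiconjBy, map_mul] using this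
  have hcne : e ⟨z ^ j, hcH⟩ ≠ 1 := by
    intro h1
    rw [← map_one e] at h1
    exact hne (congrArg Subtype.val (e.injective h1))
  have hab := comm_of_center hcne hcen'
  have := hab (e ⟨z, hz⟩) (e ⟨y, hy⟩)
  have h3 : Commute (⟨z, hz⟩ : H) ⟨y, hy⟩ := by
    have := e.injective (a₁ := ⟨z, hz⟩ * ⟨y, hy⟩) (a₂ := ⟨y, hy⟩ * ⟨z, hz⟩)
      (by rw [map_mul, map_mul]; exact this)
    simpa [Commute, SemiconjBy] using this
  have := congrArg Subtype.val h3
  simpa [Commute, SemiconjBy] using this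

end FGAux
namespace FGAux
open A
variable {α : Type*}

lemma centralizer_comm {w : FreeGroup α} (hw : w ≠ 1) :
    ∀ x y : centralizer {w}, Commute x y := by
  rintro ⟨x, hx⟩ ⟨y, hy⟩
  have hxw : Commute x w := (mem_centralizer_iff.mp hx w rfl).symm
  have hyw : Commute y w := (mem_centralizer_iff.mp hy w rfl).symm
  obtain ⟨z, hxz, hwz⟩ := exists_common_root hxw
  obtain ⟨v, hyv, hwv⟩ := exists_common_root hyw
  obtain ⟨i, hi⟩ := mem_zpowers_iff.mp hxz
  obtain ⟨j, hj⟩ := mem_zpowers_iff.mp hwz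
  obtain ⟨s, hs⟩ := mem_zpowers_iff.mp hyv
  obtain ⟨t, ht⟩ := mem_zpowers_iff.mp hwv
  have hzv : Commute z v := commute_of_zpow_eq (by rw [hj, ht]) (by rw [hj]; exact hw)
  have : Commute x y := by rw [← hi, ← hs]; exact hzv.zpow_zpow i s
  exact Subtype.ext (by simpa [Commute, SemiconjBy] using this)

end FGAux
open FGAux FGAux.A

/-- `u` is not a proper power. -/
def FreeGroup.Primitive {α : Type*} (u : FreeGroup α) : Prop :=
  ∀ (v : FreeGroup α) (k : ℕ), 0 < k → u = v ^ k → k = 1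

/-- Every nontrivial element `w` of a free group is uniquely `u ^ n` with `n ≥ 1`
and `u` not a proper power. -/
theorem freeGroup_exists_unique_primitive_root {α : Type*} (w : FreeGroup α) (hw : w ≠ 1) :
    ∃ (u : FreeGroup α) (n : ℕ), 0 < n ∧ w = u ^ n ∧ FreeGroup.Primitive u ∧
      ∀ (u' : FreeGroup α) (n' : ℕ), 0 < n' → w = u' ^ n' → FreeGroup.Primitive u' →
        u' = u ∧ n' = n := by
  classical
  obtain ⟨g, hg⟩ := exists_gen_of_comm (centralizer_comm hw)
  have hwC : w ∈ centralizer {w} := mem_centralizer_iff.mpr (by rintro h rfl; rfl)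
  obtain ⟨m, hm⟩ := mem_zpowers_iff.mp (hg ⟨w, hwC⟩)
  set g₀ : FreeGroup α := (g : FreeGroup α) with hg₀
  have hwg : g₀ ^ m = w := by have := congrArg Subtype.val hm; simpa using this
  have hm0 : m ≠ 0 := by rintro rfl; exact hw (by simpa using hwg.symm)
  have hg1 : g₀ ≠ 1 := by intro h; apply hw; rw [← hwg, h, one_zpow]
  have hinj := zpow_injective hg1
  have hmemC : ∀ v : FreeGroup α, Commute v w → ∃ s : ℤ, g₀ ^ s = v := by
    intro v hv
    have hvC : v ∈ centralizer {w} := mem_centralizer_iff.mpr (by rintro h rfl; exact hv.eq.symm)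
    obtain ⟨s, hs⟩ := mem_zpowers_iff.mp (hg ⟨v, hvC⟩)
    exact ⟨s, by have := congrArg Subtype.val hs; simpa using this⟩
  set ε : ℤ := if 0 < m then 1 else -1 with hε
  set u : FreeGroup α := g₀ ^ ε with hu
  set n : ℕ := m.natAbs with hn'
  have hε1 : ε = 1 ∨ ε = -1 := by rw [hε]; split <;> simp
  have hεn : ε * n = m := by
    rcases lt_or_ge 0 m with h | h
    · simp only [hε, if_pos h, one_mul, hn']; omega
    · simp only [hε, if_neg (not_lt.mpr h), neg_one_mul, hn']; omega
  have hn : 0 < n := Int.natAbs_pos.mpr hm0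
  have hwu : w = u ^ n := by
    rw [← hwg, ← hεn, hu, ← zpow_natCast (g₀ ^ ε) n, ← zpow_mul]
  have hprim : FreeGroup.Primitive u := by
    intro v k hk hvk
    have hvu : Commute v u := by rw [hvk]; exact (Commute.refl v).pow_right k
    have hvw : Commute v w := by rw [hwu]; exact hvu.pow_right n
    obtain ⟨s, hs⟩ := hmemC v hvw
    have hgs : g₀ ^ (s * k) = g₀ ^ ε := by
      rw [zpow_mul, hs, zpow_natCast, ← hvk, hu]
    have hsk : s * k = ε := hinj hgs
    have hdvd : (k:ℤ) ∣ 1 := by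
      rcases hε1 with h | h <;> rw [h] at hsk
      · exact Dvd.intro s (by linarith [hsk])
      · exact (Int.dvd_neg).mp (Dvd.intro s (by linarith [hsk]))
    have := Int.le_of_dvd one_pos hdvd
    omega
  refine ⟨u, n, hn, hwu, hprim, ?_⟩
  intro u' n' hn'' hw' hprim'
  have hu'w : Commute u' w := by rw [hw']; exact (Commute.refl u').pow_right n'
  obtain ⟨s, hs⟩ := hmemC u' hu'w
  have hs0 : s ≠ 0 := by
    rintro rfl
    rw [zpow_zero] at hs
    exact hw (by rw [hw', ← hs, one_pow])
  have hsval : s = 1 ∨ s = -1 := by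
    rcases hs0.lt_or_gt with hneg | hpos
    · right
      have htoNat : ((-s).toNat : ℤ) = -s := Int.toNat_of_nonneg (by omega)
      have hform : u' = (g₀⁻¹) ^ ((-s).toNat) := by
        rw [← hs, ← zpow_natCast (g₀⁻¹) ((-s).toNat), inv_zpow, ← zpow_neg, htoNat, neg_neg]
      have := hprim' (g₀⁻¹) ((-s).toNat) (by omega) hform
      omega
    · left
      have htoNat : (s.toNat : ℤ) = s := Int.toNat_of_nonneg (by omega)
      have hform : u' = g₀ ^ (s.toNat) := by rw [← hs, ← zpow_natCast g₀ s.toNat, htoNat]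
      have := hprim' g₀ s.toNat (by omega) hform
      omega
  have hwn' : g₀ ^ (s * n') = w := by
    rw [zpow_mul, hs, zpow_natCast, hw']
  have hmn : s * n' = m := hinj (show g₀ ^ (s * (n':ℤ)) = g₀ ^ m from by rw [hwn', hwg])
  rcases hsval with rfl | rfl
  · have hmpos : 0 < m := by omega
    have hε' : ε = 1 := by rw [hε, if_pos hmpos]
    constructor
    · rw [hu, hε', zpow_one, ← hs, zpow_one]
    · omega
  · have hmneg : m < 0 := by omega
    have hε' : ε = -1 := by rw [hε, if_neg (by omega)]
    constructor
    · rw [hu, hε', ← hs, zpow_neg, zpow_one]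
    · omega
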